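/- Let M be a non-negative integer square matrix in primitive Frobenius form with no zero columns. A non-negative vector v is an eigenvector of M with eigenvalue λ ≥ 1 if and only if v is a nonzero element of the non-negative cone spanned by the principal eigenvectors of M with eigenvalue λ. -/

import Mathlib

open Filter Matrix

noncomputable section

def l1 {ι : Type*} [Fintype ι] (v : ι → ℝ) : ℝ := ∑ i, |v i|

def IsPrimitive {ι : Type*} [Fintype ι] [DecidableEq ι] (M : Matrix ι ι ℝ) : Prop :=
  ∃ k : ℕ, 0 < k ∧ ∀ i j, 0 < (M ^ k) i j

def IsPowerBounded {ι : Type*} [Fintype ι] [DecidableEq ι] (M : Matrix ι ι ℝ) : Prop :=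
  ∃ C : ℝ, ∀ t : ℕ, 1 ≤ t → ∀ i j, (M ^ t) i j ≤ C

def diagBlock {ι : Type*} {m : ℕ} (M : Matrix ι ι ℝ) (b : ι → Fin m) (p : Fin m) :
    Matrix {i // b i = p} {i // b i = p} ℝ :=
  Matrix.of fun i j => M i.1 j.1

/-- `M` is a lower triangular block matrix (for the block structure given by `b`, where
blocks are ordered by the order of `Fin m`; an arbitrary function `b` accounts for
conjugation by a permutation) in which every diagonal block is primitive or power bounded. -/
def IsPBFrobenius {ι : Type*} [Fintype ι] [DecidableEq ι] (M : Matrix ι ι ℝ) : Prop :=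
  ∃ (m : ℕ) (b : ι → Fin m),
    (∀ i j, b i < b j → M i j = 0) ∧
    ∀ p : Fin m, _root_.IsPrimitive (diagBlock M b p) ∨ IsPowerBounded (diagBlock M b p)

/-- Primitive Frobenius form: lower triangular block matrix, every diagonal block
primitive (1×1 blocks with entry 1 are primitive; 1×1 blocks with entry 0 are covered
by the second disjunct). -/
def IsPrimFrobenius {ι : Type*} [Fintype ι] [DecidableEq ι] (M : Matrix ι ι ℝ) : Prop :=
  ∃ (m : ℕ) (b : ι → Fin m),
    (∀ i j, b i < b j → M i j = 0) ∧
    ∀ p : Fin m, _root_.IsPrimitive (diagBlock M b p) ∨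
      (∀ i j, b i = p → b j = p → i = j ∧ M i j = 0)

/-- No coordinate vector is mapped by a positive power of `M` to itself or to `0`. -/
def MatExpanding {ι : Type*} [Fintype ι] [DecidableEq ι] (M : Matrix ι ι ℝ) : Prop :=
  ¬ ∃ (i : ι) (k : ℕ), 0 < k ∧
      ((M ^ k).mulVec (Pi.single i 1) = Pi.single i 1 ∨ (M ^ k).mulVec (Pi.single i 1) = 0)

/-- The relation `B_p ≻ B_q` on the blocks of `M` (blocks given by `b`):
some positive power of `M` has a positive entry in block row `q`, block column `p`. -/
def Succ {n m : ℕ} (M : Matrix (Fin n) (Fin n) ℝ) (b : Fin n → Fin m) (p q : Fin m) : Prop :=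
  p ≠ q ∧ ∃ t : ℕ, 1 ≤ t ∧ ∃ r c, b r = q ∧ b c = p ∧ 0 < (M ^ t) r c

/-- `μ` is an eigenvalue of the diagonal block `q` of `M` admitting a non-negative
nonzero eigenvector supported on the block `q`.  For a primitive diagonal block this
characterizes the Perron-Frobenius eigenvalue. -/
def blockEig {n m : ℕ} (M : Matrix (Fin n) (Fin n) ℝ) (b : Fin n → Fin m)
    (q : Fin m) (μ : ℝ) : Prop :=
  ∃ u : Fin n → ℝ, u ≠ 0 ∧ (∀ i, 0 ≤ u i) ∧ (∀ i, u i ≠ 0 → b i = q) ∧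
    ∀ i, b i = q → (∑ j ∈ Finset.univ.filter (fun j => b j = q), M i j * u j) = μ * u i

/-- A block `p` is principal: its diagonal block is primitive and its PF-eigenvalue
strictly exceeds the PF-eigenvalue of every block in its dependency block union. -/
def IsPrincipalBlock {n m : ℕ} (M : Matrix (Fin n) (Fin n) ℝ) (b : Fin n → Fin m)
    (p : Fin m) : Prop :=
  _root_.IsPrimitive (diagBlock M b p) ∧
    ∀ q, Succ M b p q → ∀ μ μ' : ℝ, blockEig M b q μ → blockEig M b p μ' → μ < μ'

/-- `v` is the principal eigenvector (with eigenvalue `lam`) associated to some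
principal block `p`: the extended PF-eigenvector of the block `p` (normalized so that
its block-`p` part has ℓ¹-norm 1) plus a correction supported on the dependency
block union `C(B_p)`. -/
def IsPrincipalEV {n m : ℕ} (M : Matrix (Fin n) (Fin n) ℝ) (b : Fin n → Fin m)
    (lam : ℝ) (v : Fin n → ℝ) : Prop :=
  ∃ p : Fin m, IsPrincipalBlock M b p ∧ blockEig M b p lam ∧
    (∀ i, 0 ≤ v i) ∧ (∀ i, b i = p → 0 < v i) ∧
    (∀ i, v i ≠ 0 → b i = p ∨ Succ M b p (b i)) ∧
    (∑ i ∈ Finset.univ.filter (fun i => b i = p), v i) = 1 ∧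
    M.mulVec v = lam • v

section Basics
variable {n : ℕ}

lemma mulVec_apply' (A : Matrix (Fin n) (Fin n) ℝ) (v : Fin n → ℝ) (i : Fin n) :
    A.mulVec v i = ∑ j, A i j * v j := by rw [mulVec]; rfl

lemma mulVec_mono {A : Matrix (Fin n) (Fin n) ℝ} (hA : ∀ i j, 0 ≤ A i j)
    {u v : Fin n → ℝ} (h : ∀ i, u i ≤ v i) (i : Fin n) :
    A.mulVec u i ≤ A.mulVec v i := by
  rw [mulVec_apply', mulVec_apply']
  exact Finset.sum_le_sum fun j _ => mul_le_mul_of_nonneg_left (h j) (hA i j)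

lemma mulVec_nonneg {A : Matrix (Fin n) (Fin n) ℝ} (hA : ∀ i j, 0 ≤ A i j)
    {v : Fin n → ℝ} (hv : ∀ i, 0 ≤ v i) (i : Fin n) : 0 ≤ A.mulVec v i := by
  rw [mulVec_apply']
  exact Finset.sum_nonneg fun j _ => mul_nonneg (hA i j) (hv j)

lemma pow_nonneg_entry {A : Matrix (Fin n) (Fin n) ℝ} (hA : ∀ i j, 0 ≤ A i j)
    (t : ℕ) (i j : Fin n) : 0 ≤ (A ^ t) i j := by
  induction t generalizing i j with
  | zero => simp [Matrix.one_apply]; positivity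
  | succ t ih =>
    rw [pow_succ, Matrix.mul_apply]
    exact Finset.sum_nonneg fun l _ => mul_nonneg (ih i l) (hA l j)

lemma pow_le_pow_entry {A B : Matrix (Fin n) (Fin n) ℝ} (hA : ∀ i j, 0 ≤ A i j)
    (hAB : ∀ i j, A i j ≤ B i j) (t : ℕ) (i j : Fin n) :
    (A ^ t) i j ≤ (B ^ t) i j := by
  induction t generalizing i j with
  | zero => simp
  | succ t ih =>
    rw [pow_succ, pow_succ, Matrix.mul_apply, Matrix.mul_apply]
    refine Finset.sum_le_sum fun l _ => mul_le_mul (ih i l) (hAB l j) (hA l j) ?_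
    exact le_trans (pow_nonneg_entry hA t i l) (ih i l)

lemma pow_mulVec_eig {A : Matrix (Fin n) (Fin n) ℝ} {lam : ℝ} {v : Fin n → ℝ}
    (h : A.mulVec v = lam • v) (t : ℕ) : (A ^ t).mulVec v = (lam ^ t) • v := by
  induction t with
  | zero => simp
  | succ t ih =>
    rw [pow_succ', ← mulVec_mulVec, ih, mulVec_smul, h, smul_smul, pow_succ', mul_comm]

end Basics

section Mask
variable {n m : ℕ} (M : Matrix (Fin n) (Fin n) ℝ) (b : Fin n → Fin m)

/-- The masked matrix of block `q`. -/
def mask (q : Fin m) : Matrix (Fin n) (Fin n) ℝ :=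
  Matrix.of fun i j => if b i = q ∧ b j = q then M i j else 0

variable {M b}

lemma mask_apply (q : Fin m) (i j : Fin n) :
    mask M b q i j = if b i = q ∧ b j = q then M i j else 0 := rfl

lemma mask_nonneg (hM : ∀ i j, 0 ≤ M i j) (q : Fin m) (i j : Fin n) :
    0 ≤ mask M b q i j := by
  rw [mask_apply]; split
  · exact hM i j
  · exact le_rfl

lemma mask_le (hM : ∀ i j, 0 ≤ M i j) (q : Fin m) (i j : Fin n) :
    mask M b q i j ≤ M i j := by
  rw [mask_apply]; split
  · exact le_rfl
  · exact hM i j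

/-- Powers of the mask vanish on columns outside the block. -/
lemma maskPow_col_zero (q : Fin m) {t : ℕ} (ht : 1 ≤ t) {j : Fin n} (hj : b j ≠ q)
    (i : Fin n) : (mask M b q ^ t) i j = 0 := by
  induction t with
  | zero => omega
  | succ t ih =>
    rw [pow_succ, Matrix.mul_apply]
    refine Finset.sum_eq_zero fun l _ => ?_
    rw [mask_apply, if_neg (by tauto)]
    ring

/-- Powers of the mask agree with powers of the diagonal block. -/
lemma maskPow_eq_diagBlock (q : Fin m) (t : ℕ) (ht : 1 ≤ t) :
    ∀ (i j : Fin n) (hi : b i = q) (hj : b j = q),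
    (mask M b q ^ t) i j = ((diagBlock M b q) ^ t) ⟨i, hi⟩ ⟨j, hj⟩ := by
  induction t with
  | zero => omega
  | succ t ih =>
    intro i j hi hj
    rcases Nat.eq_or_lt_of_le ht with h1 | h1
    · have h0 : t = 0 := by omega
      subst h0
      rw [pow_one, pow_one, mask_apply, if_pos ⟨hi, hj⟩]
      rfl
    · have ht' : 1 ≤ t := by omega
      rw [pow_succ, pow_succ, Matrix.mul_apply, Matrix.mul_apply]
      have key : ∑ l : Fin n, (mask M b q ^ t) i l * mask M b q l j
          = ∑ l ∈ Finset.univ.filter (fun l => b l = q),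
              (mask M b q ^ t) i l * mask M b q l j := by
        refine (Finset.sum_filter_of_ne ?_).symm
        intro l _ hl
        by_contra hbl
        exact hl (by rw [mask_apply, if_neg (by tauto), mul_zero])
      rw [key, Finset.sum_subtype (p := fun l => b l = q)
          (Finset.univ.filter (fun l => b l = q))
          (by intro x; simp) (fun l => (mask M b q ^ t) i l * mask M b q l j)]
      refine Finset.sum_congr rfl fun l _ => ?_
      rw [ih ht' i l.1 hi l.2, mask_apply, if_pos ⟨l.2, hj⟩]
      rfl

/-- Primitivity of the diagonal block gives positivity of a power of the mask. -/
lemma maskPow_pos {q : Fin m} (h : _root_.IsPrimitive (diagBlock M b q)) :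
    ∃ k : ℕ, 1 ≤ k ∧ ∀ i j : Fin n, b i = q → b j = q → 0 < (mask M b q ^ k) i j := by
  obtain ⟨k, hk, hpos⟩ := h
  exact ⟨k, hk, fun i j hi hj => by
    rw [maskPow_eq_diagBlock q k hk i j hi hj]; exact hpos _ _⟩

/-- A block eigenvector gives an eigenvector of the mask. -/
lemma blockEig_mask {q : Fin m} {μ : ℝ} {u : Fin n → ℝ}
    (hsupp : ∀ i, u i ≠ 0 → b i = q)
    (heq : ∀ i, b i = q →
      (∑ j ∈ Finset.univ.filter (fun j => b j = q), M i j * u j) = μ * u i) :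
    (mask M b q).mulVec u = μ • u := by
  funext i
  rw [mulVec_apply']
  by_cases hi : b i = q
  · have : ∀ j : Fin n, mask M b q i j * u j
        = if b j = q then M i j * u j else 0 := by
      intro j
      rw [mask_apply]
      by_cases hj : b j = q
      · rw [if_pos ⟨hi, hj⟩, if_pos hj]
      · rw [if_neg (by tauto), if_neg hj, zero_mul]
    simp only [this]
    rw [← Finset.sum_filter, heq i hi, Pi.smul_apply, smul_eq_mul]
  · have : ∀ j : Fin n, mask M b q i j * u j = 0 := by
      intro j; rw [mask_apply, if_neg (by tauto), zero_mul]
    simp only [this, Finset.sum_const_zero]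
    have : u i = 0 := by
      by_contra h; exact hi (hsupp i h)
    rw [Pi.smul_apply, this, smul_zero]

end Mask

section Compare
variable {n m : ℕ} {M : Matrix (Fin n) (Fin n) ℝ} {b : Fin n → Fin m}

lemma mulVec_le_of_le {A B : Matrix (Fin n) (Fin n) ℝ} {v : Fin n → ℝ}
    (hv : ∀ i, 0 ≤ v i) (hAB : ∀ i j, A i j ≤ B i j) (i : Fin n) :
    A.mulVec v i ≤ B.mulVec v i := by
  rw [mulVec_apply', mulVec_apply']
  exact Finset.sum_le_sum fun j _ => mul_le_mul_of_nonneg_right (hAB i j) (hv j)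

lemma mulVec_single_le {A : Matrix (Fin n) (Fin n) ℝ} {v : Fin n → ℝ}
    (hA : ∀ i j, 0 ≤ A i j) (hv : ∀ i, 0 ≤ v i) (i r : Fin n) :
    A i r * v r ≤ A.mulVec v i := by
  rw [mulVec_apply']
  exact Finset.single_le_sum (fun j _ => mul_nonneg (hA i j) (hv j)) (Finset.mem_univ r)

/-- For a primitive block, a nonzero non-negative mask-eigenvector has positive
eigenvalue and is strictly positive on the block. -/
lemma blockEig_pos (hM : ∀ i j, 0 ≤ M i j) {q : Fin m}
    (hq : _root_.IsPrimitive (diagBlock M b q)) {μ : ℝ} {u : Fin n → ℝ}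
    (hune : u ≠ 0) (hu0 : ∀ i, 0 ≤ u i) (hsupp : ∀ i, u i ≠ 0 → b i = q)
    (heig : (mask M b q).mulVec u = μ • u) :
    0 < μ ∧ ∀ i, b i = q → 0 < u i := by
  obtain ⟨k, hk, hpos⟩ := maskPow_pos hq
  obtain ⟨j0, hj0⟩ : ∃ j0, u j0 ≠ 0 := by
    by_contra h; push_neg at h; exact hune (funext fun i => h i)
  have hj0q : b j0 = q := hsupp j0 hj0
  have hj0pos : 0 < u j0 := lt_of_le_of_ne (hu0 j0) (Ne.symm hj0)
  have hμ0 : 0 ≤ μ := by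
    have h1 : 0 ≤ (mask M b q).mulVec u j0 :=
      mulVec_nonneg (mask_nonneg hM q) hu0 j0
    rw [heig] at h1
    simp only [Pi.smul_apply, smul_eq_mul] at h1
    nlinarith
  have hk' : (mask M b q ^ k).mulVec u = (μ ^ k) • u := pow_mulVec_eig heig k
  have key : ∀ i, b i = q → 0 < μ ^ k * u i := by
    intro i hi
    have h2 : (mask M b q ^ k) i j0 * u j0 ≤ (mask M b q ^ k).mulVec u i :=
      mulVec_single_le (pow_nonneg_entry (mask_nonneg hM q) k) hu0 i j0
    rw [hk'] at h2
    simp only [Pi.smul_apply, smul_eq_mul] at h2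
    exact lt_of_lt_of_le (mul_pos (hpos i j0 hi hj0q) hj0pos) h2
  have hμpos : 0 < μ := by
    rcases lt_or_eq_of_le hμ0 with h | h
    · exact h
    · exfalso
      have := key j0 hj0q
      rw [← h, zero_pow (by omega), zero_mul] at this
      exact lt_irrefl 0 this
  refine ⟨hμpos, fun i hi => ?_⟩
  have h3 := key i hi
  nlinarith [pow_pos hμpos k]

/-- One-sided comparison of mask eigenvalues on a primitive block. -/
lemma eig_le (hM : ∀ i j, 0 ≤ M i j) {q : Fin m}
    (hq : _root_.IsPrimitive (diagBlock M b q)) {α β : ℝ} {u w : Fin n → ℝ}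
    (hune : u ≠ 0) (hu0 : ∀ i, 0 ≤ u i) (husupp : ∀ i, u i ≠ 0 → b i = q)
    (hueig : (mask M b q).mulVec u = α • u)
    (hwne : w ≠ 0) (hw0 : ∀ i, 0 ≤ w i) (hwsupp : ∀ i, w i ≠ 0 → b i = q)
    (hweig : (mask M b q).mulVec w = β • w) :
    β ≤ α := by
  obtain ⟨k, hk, hpos⟩ := maskPow_pos hq
  obtain ⟨hα, hupos⟩ := blockEig_pos hM hq hune hu0 husupp hueig
  obtain ⟨hβ, hwpos⟩ := blockEig_pos hM hq hwne hw0 hwsupp hweig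
  obtain ⟨j0, hj0⟩ : ∃ j0, u j0 ≠ 0 := by
    by_contra h; push_neg at h; exact hune (funext fun i => h i)
  have hsne : (Finset.univ.filter (fun i => b i = q)).Nonempty :=
    ⟨j0, Finset.mem_filter.2 ⟨Finset.mem_univ _, husupp j0 hj0⟩⟩
  obtain ⟨i0, hi0mem, hi0min⟩ :=
    (Finset.univ.filter (fun i => b i = q)).exists_min_image (fun i => u i / w i) hsne
  have hi0q : b i0 = q := (Finset.mem_filter.1 hi0mem).2
  set r := u i0 / w i0 with hr
  have hwi0 : 0 < w i0 := hwpos i0 hi0q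
  have hrpos : 0 < r := div_pos (hupos i0 hi0q) hwi0
  have hbound : ∀ j, r * w j ≤ u j := by
    intro j
    by_cases hj : b j = q
    · have := hi0min j (Finset.mem_filter.2 ⟨Finset.mem_univ _, hj⟩)
      rw [div_le_div_iff₀ hwi0 (hwpos j hj)] at this
      calc r * w j = u i0 / w i0 * w j := rfl
        _ ≤ u j := by
            rw [div_mul_eq_mul_div, div_le_iff₀ hwi0]
            nlinarith
    · have hu : u j = 0 := by by_contra h; exact hj (husupp j h)
      have hw : w j = 0 := by by_contra h; exact hj (hwsupp j h)
      rw [hu, hw, mul_zero]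
  have hk' : (mask M b q ^ k).mulVec u = (α ^ k) • u := pow_mulVec_eig hueig k
  have hk'' : (mask M b q ^ k).mulVec w = (β ^ k) • w := pow_mulVec_eig hweig k
  have step : (mask M b q ^ k).mulVec (r • w) i0 ≤ (mask M b q ^ k).mulVec u i0 :=
    mulVec_mono (pow_nonneg_entry (mask_nonneg hM q) k)
      (fun i => by simpa using hbound i) i0
  rw [mulVec_smul, hk', hk''] at step
  simp only [Pi.smul_apply, smul_eq_mul] at step
  have hui0 : u i0 = r * w i0 := by
    rw [hr, div_mul_eq_mul_div, mul_div_assoc, div_self (ne_of_gt hwi0), mul_one]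
  rw [hui0] at step
  -- step : r * (β ^ k * w i0) ≤ α ^ k * (r * w i0)
  have hklt : β ^ k ≤ α ^ k := by nlinarith [mul_pos hrpos hwi0]
  exact (pow_le_pow_iff_left₀ (le_of_lt hβ) (le_of_lt hα) (by omega)).mp hklt

lemma eig_unique (hM : ∀ i j, 0 ≤ M i j) {q : Fin m}
    (hq : _root_.IsPrimitive (diagBlock M b q)) {α β : ℝ} {u w : Fin n → ℝ}
    (hune : u ≠ 0) (hu0 : ∀ i, 0 ≤ u i) (husupp : ∀ i, u i ≠ 0 → b i = q)
    (hueig : (mask M b q).mulVec u = α • u)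
    (hwne : w ≠ 0) (hw0 : ∀ i, 0 ≤ w i) (hwsupp : ∀ i, w i ≠ 0 → b i = q)
    (hweig : (mask M b q).mulVec w = β • w) :
    α = β :=
  le_antisymm (eig_le hM hq hwne hw0 hwsupp hweig hune hu0 husupp hueig)
    (eig_le hM hq hune hu0 husupp hueig hwne hw0 hwsupp hweig)

end Compare

section StepB
variable {n m : ℕ} {M : Matrix (Fin n) (Fin n) ℝ} {b : Fin n → Fin m}

/-- If a block `q` receives (at some time `t0`) a strictly positive inflow from
outside `q` under the eigenvector `w` of `M`, then any mask-eigenvalue of the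
(primitive) block `q` is strictly below `lam`. -/
lemma stepB (hM : ∀ i j, 0 ≤ M i j) {q : Fin m}
    (hq : _root_.IsPrimitive (diagBlock M b q)) {μ lam : ℝ} (hlam : 0 < lam)
    {u : Fin n → ℝ} (hune : u ≠ 0) (hu0 : ∀ i, 0 ≤ u i)
    (hsupp : ∀ i, u i ≠ 0 → b i = q)
    (heig : (mask M b q).mulVec u = μ • u)
    {w : Fin n → ℝ} (hw0 : ∀ i, 0 ≤ w i) (hweig : M.mulVec w = lam • w)
    {t0 : ℕ} (ht0 : 1 ≤ t0) {r c : Fin n} (hr : b r = q) (hc : b c ≠ q)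
    (hMrc : 0 < (M ^ t0) r c) (hwc : 0 < w c) :
    μ < lam := by
  obtain ⟨k, hk, hpos⟩ := maskPow_pos hq
  obtain ⟨hμ, hupos⟩ := blockEig_pos hM hq hune hu0 hsupp heig
  have hMk : ∀ t (i j : Fin n), (mask M b q ^ t) i j ≤ (M ^ t) i j :=
    fun t => pow_le_pow_entry (mask_nonneg hM q) (mask_le hM q) t
  have hMpow : ∀ t, (M ^ t).mulVec w = (lam ^ t) • w := pow_mulVec_eig hweig
  have hmaskpownn : ∀ t (i j : Fin n), 0 ≤ (mask M b q ^ t) i j :=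
    fun t => pow_nonneg_entry (mask_nonneg hM q) t
  -- w is positive at r
  have hwr : 0 < w r := by
    have h1 : (M ^ t0) r c * w c ≤ (M ^ t0).mulVec w r :=
      mulVec_single_le (pow_nonneg_entry hM t0) hw0 r c
    rw [hMpow t0] at h1
    simp only [Pi.smul_apply, smul_eq_mul] at h1
    nlinarith [pow_pos hlam t0, mul_pos hMrc hwc]
  -- w is positive on all of q
  have hwq : ∀ i, b i = q → 0 < w i := by
    intro i hi
    have h1 : (mask M b q ^ k) i r * w r ≤ (mask M b q ^ k).mulVec w i :=
      mulVec_single_le (hmaskpownn k) hw0 i r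
    have h2 : (mask M b q ^ k).mulVec w i ≤ (M ^ k).mulVec w i :=
      mulVec_le_of_le hw0 (hMk k) i
    rw [hMpow k] at h2
    simp only [Pi.smul_apply, smul_eq_mul] at h2
    nlinarith [pow_pos hlam k, mul_pos (hpos i r hi hr) hwr]
  -- min ratio s0 = w i0 / u i0 over the block q
  have hsne : (Finset.univ.filter (fun i => b i = q)).Nonempty :=
    ⟨r, Finset.mem_filter.2 ⟨Finset.mem_univ _, hr⟩⟩
  obtain ⟨i0, hi0mem, hi0min⟩ :=
    (Finset.univ.filter (fun i => b i = q)).exists_min_image (fun i => w i / u i) hsne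
  have hi0q : b i0 = q := (Finset.mem_filter.1 hi0mem).2
  set s0 := w i0 / u i0 with hs0
  have hui0 : 0 < u i0 := hupos i0 hi0q
  have hs0pos : 0 < s0 := div_pos (hwq i0 hi0q) hui0
  have hbound : ∀ j, s0 * u j ≤ w j := by
    intro j
    by_cases hj : b j = q
    · have := hi0min j (Finset.mem_filter.2 ⟨Finset.mem_univ _, hj⟩)
      rw [div_le_div_iff₀ hui0 (hupos j hj)] at this
      rw [hs0, div_mul_eq_mul_div, div_le_iff₀ hui0]
      nlinarith
    · have hu : u j = 0 := by by_contra h; exact hj (hsupp j h)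
      rw [hu, mul_zero]; exact hw0 j
  have hwi0 : w i0 = s0 * u i0 := by
    rw [hs0, div_mul_eq_mul_div, mul_div_assoc, div_self (ne_of_gt hui0), mul_one]
  -- basic comparison: lam^T w ≥ mask^T w ≥ s0 μ^T u  at every coordinate
  have hchain : ∀ (T : ℕ) (i : Fin n),
      s0 * (μ ^ T * u i) ≤ (mask M b q ^ T).mulVec w i ∧
      (mask M b q ^ T).mulVec w i ≤ lam ^ T * w i := by
    intro T i
    constructor
    · have h1 : (mask M b q ^ T).mulVec (s0 • u) i ≤ (mask M b q ^ T).mulVec w i :=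
        mulVec_mono (hmaskpownn T) (fun j => by simpa using hbound j) i
      rw [mulVec_smul, pow_mulVec_eig heig T] at h1
      simpa using h1
    · have h2 : (mask M b q ^ T).mulVec w i ≤ (M ^ T).mulVec w i :=
        mulVec_le_of_le hw0 (hMk T) i
      rw [hMpow T] at h2
      simpa using h2
  -- weak inequality μ ≤ lam
  have hle : μ ≤ lam := by
    have h1 := (hchain 1 i0).1
    have h2 := (hchain 1 i0).2
    rw [pow_one, pow_one] at h1 h2
    nlinarith [mul_pos hs0pos hui0]
  rcases lt_or_eq_of_le hle with h | h
  · exact h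
  -- now suppose μ = lam and derive a contradiction using the strict inflow
  exfalso
  set δ := (M ^ t0) r c * w c with hδ
  have hδpos : 0 < δ := mul_pos hMrc hwc
  -- inflow inequality: (M^t0) w ≥ (mask^t0) w + δ · e_r
  have hinflow : ∀ i, (mask M b q ^ t0).mulVec w i + (if i = r then δ else 0)
      ≤ (M ^ t0).mulVec w i := by
    intro i
    by_cases hir : i = r
    · subst hir
      rw [if_pos rfl]
      have hsplit : (M ^ t0).mulVec w i - (mask M b q ^ t0).mulVec w i
          = ∑ j, ((M ^ t0) i j - (mask M b q ^ t0) i j) * w j := by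
        rw [mulVec_apply', mulVec_apply', ← Finset.sum_sub_distrib]
        exact Finset.sum_congr rfl fun j _ => by ring
      have hterm : ((M ^ t0) i c - (mask M b q ^ t0) i c) * w c
          ≤ ∑ j, ((M ^ t0) i j - (mask M b q ^ t0) i j) * w j :=
        Finset.single_le_sum
          (f := fun j => ((M ^ t0) i j - (mask M b q ^ t0) i j) * w j)
          (fun j _ => mul_nonneg (by linarith [hMk t0 i j]) (hw0 j))
          (Finset.mem_univ c)
      rw [maskPow_col_zero q ht0 hc i, sub_zero] at hterm
      linarith [hsplit ▸ hterm]
    · rw [if_neg hir, add_zero]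
      exact mulVec_le_of_le hw0 (hMk t0) i
  -- iterate k more steps and evaluate at i0
  have final : lam ^ (k + t0) * w i0
      ≥ s0 * (μ ^ (k + t0) * u i0) + δ * (mask M b q ^ k) i0 r := by
    have e1 : lam ^ (k + t0) * w i0 = (M ^ k).mulVec ((M ^ t0).mulVec w) i0 := by
      rw [mulVec_mulVec, ← pow_add, hMpow (k + t0)]
      simp
    have e2 : (mask M b q ^ k).mulVec ((M ^ t0).mulVec w) i0
        ≤ (M ^ k).mulVec ((M ^ t0).mulVec w) i0 :=
      mulVec_le_of_le (fun i => mulVec_nonneg (pow_nonneg_entry hM t0) hw0 i)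
        (hMk k) i0
    have e3 : (mask M b q ^ k).mulVec
        (fun i => (mask M b q ^ t0).mulVec w i + (if i = r then δ else 0)) i0
        ≤ (mask M b q ^ k).mulVec ((M ^ t0).mulVec w) i0 :=
      mulVec_mono (hmaskpownn k) hinflow i0
    have e4 : (mask M b q ^ k).mulVec
        (fun i => (mask M b q ^ t0).mulVec w i + (if i = r then δ else 0)) i0
        = (mask M b q ^ (k + t0)).mulVec w i0 + δ * (mask M b q ^ k) i0 r := by
      rw [mulVec_apply']
      have : ∀ j, (mask M b q ^ k) i0 j *
            ((mask M b q ^ t0).mulVec w j + (if j = r then δ else 0))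
          = (mask M b q ^ k) i0 j * (mask M b q ^ t0).mulVec w j
            + (if j = r then (mask M b q ^ k) i0 j * δ else 0) := by
        intro j
        by_cases hjr : j = r
        · rw [if_pos hjr, if_pos hjr]; ring
        · rw [if_neg hjr, if_neg hjr]; ring
      rw [Finset.sum_congr rfl fun j _ => this j, Finset.sum_add_distrib,
        Finset.sum_ite_eq' Finset.univ r
          (fun j => (mask M b q ^ k) i0 j * δ), if_pos (Finset.mem_univ r)]
      congr 1
      · rw [pow_add, ← mulVec_mulVec, mulVec_apply']
      · ring
    have e5 : s0 * (μ ^ (k + t0) * u i0)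
        ≤ (mask M b q ^ (k + t0)).mulVec w i0 := (hchain (k + t0) i0).1
    linarith
  have hmaskpos : 0 < (mask M b q ^ k) i0 r := hpos i0 r hi0q hr
  rw [← h] at final
  rw [hwi0] at final
  nlinarith [mul_pos hδpos hmaskpos, pow_pos hμ (k + t0)]

end StepB

section Main
variable {n m : ℕ} {M : Matrix (Fin n) (Fin n) ℝ} {b : Fin n → Fin m}

lemma mask_mulVec_eq {q : Fin m} {u : Fin n → ℝ} {i : Fin n} (hi : b i = q) :
    (mask M b q).mulVec u i
      = ∑ j ∈ Finset.univ.filter (fun j => b j = q), M i j * u j := by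
  rw [mulVec_apply']
  have h : ∀ j, mask M b q i j * u j = if b j = q then M i j * u j else 0 := by
    intro j
    rw [mask_apply]
    by_cases hj : b j = q
    · rw [if_pos ⟨hi, hj⟩, if_pos hj]
    · rw [if_neg (by tauto), if_neg hj, zero_mul]
  rw [Finset.sum_congr rfl fun j _ => h j, ← Finset.sum_filter]

lemma powLow (hlow : ∀ i j, b i < b j → M i j = 0) (t : ℕ) :
    ∀ i j, b i < b j → (M ^ t) i j = 0 := by
  induction t with
  | zero =>
    intro i j hij
    exact Matrix.one_apply_ne (fun h => by subst h; exact lt_irrefl _ hij)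
  | succ t ih =>
    intro i j hij
    rw [pow_succ, Matrix.mul_apply]
    refine Finset.sum_eq_zero fun l _ => ?_
    by_cases hl : b i < b l
    · rw [ih i l hl, zero_mul]
    · rw [hlow l j (lt_of_le_of_lt (not_lt.1 hl) hij), mul_zero]

/-- Main extraction step: peel off one principal eigenvector from a non-negative
eigenvector, supported on its minimal block. -/
lemma extract (hM : ∀ i j, 0 ≤ M i j)
    (hlow : ∀ i j, b i < b j → M i j = 0)
    (hdiag : ∀ p : Fin m, _root_.IsPrimitive (diagBlock M b p) ∨
      (∀ i j, b i = p → b j = p → i = j ∧ M i j = 0))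
    {lam : ℝ} (hlam : 1 ≤ lam)
    {v : Fin n → ℝ} (hv : ∀ i, 0 ≤ v i) (hvne : v ≠ 0)
    (heig : M.mulVec v = lam • v) :
    ∃ (w : Fin n → ℝ) (c : ℝ) (p : Fin m),
      IsPrincipalEV M b lam w ∧ 0 < c ∧
      (∀ i, 0 ≤ v i - c * w i) ∧
      (M.mulVec (fun i => v i - c * w i) = lam • (fun i => v i - c * w i)) ∧
      (∀ i, v i - c * w i ≠ 0 → v i ≠ 0) ∧
      (∃ i, b i = p ∧ v i ≠ 0) ∧
      (∀ i, b i = p → v i - c * w i = 0) := by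
  have hlam0 : 0 < lam := lt_of_lt_of_le zero_lt_one hlam
  have hlamne : lam ≠ 0 := ne_of_gt hlam0
  -- the minimal block of the support of v
  obtain ⟨i₀, hi₀⟩ : ∃ i, v i ≠ 0 := by
    by_contra h; push_neg at h; exact hvne (funext fun i => h i)
  set suppB := (Finset.univ.filter (fun i => v i ≠ 0)).image b with hsuppB
  have hsne : suppB.Nonempty :=
    ⟨b i₀, Finset.mem_image.2 ⟨i₀, Finset.mem_filter.2 ⟨Finset.mem_univ _, hi₀⟩, rfl⟩⟩
  set p := suppB.min' hsne with hpdef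
  obtain ⟨ip, hipm, hipb⟩ := Finset.mem_image.1 (suppB.min'_mem hsne)
  have hipv : v ip ≠ 0 := (Finset.mem_filter.1 hipm).2
  have hmin : ∀ j, v j ≠ 0 → p ≤ b j := fun j hj =>
    suppB.min'_le (b j) (Finset.mem_image.2 ⟨j, Finset.mem_filter.2 ⟨Finset.mem_univ _, hj⟩, rfl⟩)
  -- the truncation of v to the block p
  set vp : Fin n → ℝ := fun i => if b i = p then v i else 0 with hvpdef
  have hvp0 : ∀ i, 0 ≤ vp i := fun i => by
    rw [hvpdef]; dsimp only; split
    · exact hv i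
    · exact le_rfl
  have hvplev : ∀ i, vp i ≤ v i := fun i => by
    rw [hvpdef]; dsimp only; split
    · exact le_rfl
    · exact hv i
  have hvpne : vp ≠ 0 := by
    intro h
    apply hipv
    have := congrFun h ip
    rw [hvpdef] at this
    simpa [hipb, hpdef] using this
  have hvpsupp : ∀ i, vp i ≠ 0 → b i = p := by
    intro i hi
    rw [hvpdef] at hi
    by_contra h
    simp [h] at hi
  -- vp is a mask-eigenvector of the block p
  have hvpeig : (mask M b p).mulVec vp = lam • vp := by
    funext i
    by_cases hi : b i = p
    · rw [mask_mulVec_eq hi]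
      have hMv := congrFun heig i
      rw [mulVec_apply'] at hMv
      have key : ∑ j ∈ Finset.univ.filter (fun j => b j = p), M i j * vp j
          = ∑ j, M i j * v j := by
        rw [Finset.sum_filter]
        refine Finset.sum_congr rfl fun j _ => ?_
        by_cases hj : b j = p
        · rw [if_pos hj, hvpdef]; dsimp only; rw [if_pos hj]
        · rw [if_neg hj]
          by_cases hvj : v j = 0
          · rw [hvj, mul_zero]
          · have hple : p ≤ b j := hmin j hvj
            have : p < b j := lt_of_le_of_ne hple (Ne.symm hj)
            rw [hlow i j (hi ▸ this), zero_mul]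
      rw [key, hMv, Pi.smul_apply, Pi.smul_apply, smul_eq_mul, smul_eq_mul, hvpdef]
      dsimp only
      rw [if_pos hi]
    · have h1 : ∀ j, mask M b p i j * vp j = 0 := fun j => by
        rw [mask_apply, if_neg (by tauto), zero_mul]
      rw [mulVec_apply', Finset.sum_congr rfl (fun j _ => h1 j), Finset.sum_const_zero]
      rw [Pi.smul_apply, smul_eq_mul, hvpdef]
      dsimp only
      rw [if_neg hi, mul_zero]
  -- the block p is primitive
  have hprim : _root_.IsPrimitive (diagBlock M b p) := by
    rcases hdiag p with h | h
    · exact h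
    · exfalso
      have h1 := congrFun hvpeig ip
      rw [mask_mulVec_eq hipb] at h1
      have h2 : ∑ j ∈ Finset.univ.filter (fun j => b j = p), M ip j * vp j = 0 :=
        Finset.sum_eq_zero fun j hj => by
          rw [(h ip j hipb (Finset.mem_filter.1 hj).2).2, zero_mul]
      rw [h2, Pi.smul_apply, smul_eq_mul] at h1
      have h3 : vp ip = v ip := by rw [hvpdef]; dsimp only; rw [if_pos hipb]
      have := mul_ne_zero hlamne (h3 ▸ hipv)
      exact this h1.symm
  obtain ⟨_, hvppos⟩ := blockEig_pos hM hprim hvpne hvp0 hvpsupp hvpeig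
  -- the increasing approximations W t = lam⁻ᵗ Mᵗ vp
  set W : ℕ → Fin n → ℝ := fun t i => (lam ^ t)⁻¹ * (M ^ t).mulVec vp i with hWdef
  have hW0 : ∀ t i, 0 ≤ W t i := fun t i =>
    mul_nonneg (inv_nonneg.2 (pow_nonneg (le_of_lt hlam0) t))
      (mulVec_nonneg (pow_nonneg_entry hM t) hvp0 i)
  have hWzero : ∀ i, W 0 i = vp i := fun i => by
    rw [hWdef]; dsimp only; rw [pow_zero, pow_zero, inv_one, one_mul, Matrix.one_mulVec]
  have hWle : ∀ t i, W t i ≤ v i := by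
    intro t i
    have h1 : (M ^ t).mulVec vp i ≤ (M ^ t).mulVec v i :=
      mulVec_mono (pow_nonneg_entry hM t) hvplev i
    rw [pow_mulVec_eig heig t, Pi.smul_apply, smul_eq_mul] at h1
    rw [hWdef]; dsimp only
    rw [inv_mul_le_iff₀ (pow_pos hlam0 t)]
    exact h1
  have hstep : ∀ i, lam * vp i ≤ M.mulVec vp i := by
    intro i
    have h1 : (mask M b p).mulVec vp i ≤ M.mulVec vp i :=
      mulVec_le_of_le hvp0 (mask_le hM p) i
    rw [hvpeig, Pi.smul_apply, smul_eq_mul] at h1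
    exact h1
  have hWmono : ∀ i, Monotone fun t => W t i := by
    intro i
    apply monotone_nat_of_le_succ
    intro t
    have h1 : (M ^ t).mulVec (fun j => lam * vp j) i ≤ (M ^ t).mulVec (M.mulVec vp) i :=
      mulVec_mono (pow_nonneg_entry hM t) hstep i
    have h2 : (M ^ t).mulVec (fun j => lam * vp j) i = lam * (M ^ t).mulVec vp i := by
      have : (fun j => lam * vp j) = lam • vp := by funext j; simp
      rw [this, mulVec_smul, Pi.smul_apply, smul_eq_mul]
    have h3 : (M ^ t).mulVec (M.mulVec vp) i = (M ^ (t + 1)).mulVec vp i := by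
      rw [mulVec_mulVec, ← pow_succ]
    rw [hWdef]; dsimp only
    rw [h3] at h1
    rw [h2] at h1
    have hp1 : (0:ℝ) < lam ^ (t + 1) := pow_pos hlam0 _
    have h4 : (lam ^ t)⁻¹ * (M ^ t).mulVec vp i
        = (lam ^ (t+1))⁻¹ * (lam * (M ^ t).mulVec vp i) := by
      rw [pow_succ lam]
      field_simp
    rw [h4]
    exact mul_le_mul_of_nonneg_left h1 (le_of_lt (inv_pos.2 hp1))
  -- the limit eigenvector w'
  set w' : Fin n → ℝ := fun i => ⨆ t, W t i with hw'def
  have hbdd : ∀ i, BddAbove (Set.range fun t => W t i) := fun i =>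
    ⟨v i, by rintro x ⟨t, rfl⟩; exact hWle t i⟩
  have htend : ∀ i, Filter.Tendsto (fun t => W t i) Filter.atTop (nhds (w' i)) :=
    fun i => tendsto_atTop_ciSup (hWmono i) (hbdd i)
  have hWlew' : ∀ t i, W t i ≤ w' i := fun t i => le_ciSup (hbdd i) t
  have hw'0 : ∀ i, 0 ≤ w' i := fun i => le_trans (hW0 0 i) (hWlew' 0 i)
  have hw'le : ∀ i, w' i ≤ v i := fun i => ciSup_le fun t => hWle t i
  -- W is constant on the block p
  have hMtvp : ∀ t i, b i = p → (M ^ t).mulVec vp i = lam ^ t * vp i := by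
    intro t
    induction t with
    | zero => intro i hi; rw [pow_zero, pow_zero, Matrix.one_mulVec, one_mul]
    | succ t ih =>
      intro i hi
      have hoff : ∀ j, b j < p → (M ^ t).mulVec vp j = 0 := by
        intro j hj
        rw [mulVec_apply']
        refine Finset.sum_eq_zero fun l _ => ?_
        by_cases hl : vp l = 0
        · rw [hl, mul_zero]
        · have : b l = p := hvpsupp l hl
          rw [powLow hlow t j l (this ▸ hj), zero_mul]
      have hMt : (M ^ (t+1)).mulVec vp i = M.mulVec ((M ^ t).mulVec vp) i := by
        rw [mulVec_mulVec, ← pow_succ']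
      rw [hMt, mulVec_apply']
      have key : ∀ j, M i j * (M ^ t).mulVec vp j
          = if b j = p then M i j * (lam ^ t * vp j) else 0 := by
        intro j
        by_cases hj : b j = p
        · rw [if_pos hj, ih j hj]
        · rw [if_neg hj]
          rcases lt_or_gt_of_ne (fun h => hj h) with h | h
          · rw [hoff j h, mul_zero]
          · rw [hlow i j (by rw [hi]; exact h), zero_mul]
      rw [Finset.sum_congr rfl fun j _ => key j, ← Finset.sum_filter]
      have : ∑ j ∈ Finset.univ.filter (fun j => b j = p), M i j * (lam ^ t * vp j)
          = lam ^ t * ∑ j ∈ Finset.univ.filter (fun j => b j = p), M i j * vp j := by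
        rw [Finset.mul_sum]
        exact Finset.sum_congr rfl fun j _ => by ring
      rw [this, ← mask_mulVec_eq hi, hvpeig, Pi.smul_apply, smul_eq_mul, pow_succ]
      ring
  have hWp : ∀ t i, b i = p → W t i = vp i := by
    intro t i hi
    rw [hWdef]; dsimp only
    rw [hMtvp t i hi, inv_mul_cancel_left₀ (pow_ne_zero t hlamne)]
  have hw'p : ∀ i, b i = p → w' i = v i := by
    intro i hi
    have h1 : w' i = vp i := by
      rw [hw'def]; dsimp only
      rw [show (fun t => W t i) = fun _ => vp i from funext fun t => hWp t i hi]
      exact ciSup_const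
    rw [h1, hvpdef]; dsimp only; rw [if_pos hi]
  -- w' is an eigenvector of M
  have hw'eig : M.mulVec w' = lam • w' := by
    funext i
    have h1 : Filter.Tendsto (fun t => M.mulVec (W t) i) Filter.atTop
        (nhds (M.mulVec w' i)) := by
      simp only [mulVec_apply']
      exact tendsto_finset_sum _ fun j _ => ((htend j).const_mul (M i j))
    have h2 : ∀ t, M.mulVec (W t) i = lam * W (t+1) i := by
      intro t
      rw [hWdef]; dsimp only
      have e0 : (fun j => (lam ^ t)⁻¹ * (M ^ t).mulVec vp j)
          = (lam ^ t)⁻¹ • ((M ^ t).mulVec vp) := by funext j; simp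
      rw [e0, mulVec_smul, mulVec_mulVec, ← pow_succ', Pi.smul_apply, smul_eq_mul]
      rw [pow_succ lam]
      field_simp
    have h3 : Filter.Tendsto (fun t => M.mulVec (W t) i) Filter.atTop
        (nhds (lam * w' i)) := by
      rw [show (fun t => M.mulVec (W t) i) = fun t => lam * W (t+1) i from
        funext h2]
      exact (((htend i).comp (Filter.tendsto_add_atTop_nat 1)).const_mul lam)
    have := tendsto_nhds_unique h1 h3
    rw [this, Pi.smul_apply, smul_eq_mul]
  -- support of w'
  have hw'supp : ∀ i, w' i ≠ 0 → b i = p ∨ Succ M b p (b i) := by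
    intro i hi
    obtain ⟨t, ht⟩ : ∃ t, W t i ≠ 0 := by
      by_contra h; push_neg at h
      apply hi
      rw [hw'def]; dsimp only
      rw [show (fun t => W t i) = fun _ => (0:ℝ) from funext fun t => h t]
      exact ciSup_const
    have htpos : 0 < (M ^ t).mulVec vp i := by
      rcases lt_or_eq_of_le (mulVec_nonneg (pow_nonneg_entry hM t) hvp0 i) with h | h
      · exact h
      · exfalso; apply ht; rw [hWdef]; dsimp only; rw [← h, mul_zero]
    rw [mulVec_apply'] at htpos
    obtain ⟨c', _, hc'⟩ := Finset.exists_ne_zero_of_sum_ne_zero (ne_of_gt htpos)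
    have hvpc' : vp c' ≠ 0 := fun h => hc' (by rw [h, mul_zero])
    have hbc' : b c' = p := hvpsupp c' hvpc'
    have hMic' : 0 < (M ^ t) i c' := by
      rcases lt_or_eq_of_le (pow_nonneg_entry hM t i c') with h | h
      · exact h
      · exfalso; exact hc' (by rw [← h, zero_mul])
    by_cases hip' : b i = p
    · exact Or.inl hip'
    · right
      have ht1 : 1 ≤ t := by
        rcases Nat.eq_zero_or_pos t with h | h
        · exfalso
          subst h
          rw [pow_zero] at hMic'
          have : i = c' := by
            by_contra hne
            rw [Matrix.one_apply_ne hne] at hMic'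
            exact lt_irrefl 0 hMic'
          exact hip' (this ▸ hbc')
        · exact h
      exact ⟨fun h => hip' h.symm, t, ht1, i, c', rfl, hbc', hMic'⟩
  -- the normalization constant
  set c : ℝ := ∑ i ∈ Finset.univ.filter (fun i => b i = p), v i with hcdef
  have hvpos : ∀ i, b i = p → 0 < v i := by
    intro i hi
    have := hvppos i hi
    rw [hvpdef] at this; dsimp only at this; rw [if_pos hi] at this
    exact this
  have hcpos : 0 < c := by
    rw [hcdef]
    refine Finset.sum_pos (fun i hi => hvpos i (Finset.mem_filter.1 hi).2)
      ⟨ip, Finset.mem_filter.2 ⟨Finset.mem_univ _, hipb⟩⟩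
  have hcne : c ≠ 0 := ne_of_gt hcpos
  refine ⟨c⁻¹ • w', c, p, ?_, hcpos, ?_, ?_, ?_, ⟨ip, hipb, hipv⟩, ?_⟩
  · -- IsPrincipalEV
    refine ⟨p, ⟨hprim, ?_⟩, ?_, ?_, ?_, ?_, ?_, ?_⟩
    · -- principality
      intro q hSucc μ μ' hbq hbp
      obtain ⟨hpq, t0, ht0, r, c', hr, hc', hMrc⟩ := hSucc
      -- μ' = lam
      obtain ⟨u', hu'ne, hu'0, hu'supp, hu'eq⟩ := hbp
      have hu'eig : (mask M b p).mulVec u' = μ' • u' := blockEig_mask hu'supp hu'eq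
      have hμ'lam : lam = μ' :=
        eig_unique hM hprim hvpne hvp0 hvpsupp hvpeig hu'ne hu'0 hu'supp hu'eig
      rw [← hμ'lam]
      -- μ < lam
      obtain ⟨u, hune, hu0, husupp, hueq⟩ := hbq
      rcases hdiag q with hqprim | hqdeg
      · -- primitive case: use stepB against w'
        have hw'c' : 0 < w' c' := by rw [hw'p c' hc']; exact hvpos c' hc'
        have hbc'q : b c' ≠ q := by rw [hc']; exact hpq
        exact stepB hM hqprim hlam0 hune hu0 husupp (blockEig_mask husupp hueq)
          hw'0 hw'eig ht0 hr hbc'q hMrc hw'c'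
      · -- degenerate case : μ = 0
        obtain ⟨iu, hiu⟩ : ∃ i, u i ≠ 0 := by
          by_contra h; push_neg at h; exact hune (funext fun i => h i)
        have hiuq : b iu = q := husupp iu hiu
        have h1 := hueq iu hiuq
        have h2 : ∑ j ∈ Finset.univ.filter (fun j => b j = q), M iu j * u j = 0 :=
          Finset.sum_eq_zero fun j hj => by
            rw [(hqdeg iu j hiuq (Finset.mem_filter.1 hj).2).2, zero_mul]
        rw [h2] at h1
        have : μ = 0 := by
          rcases mul_eq_zero.1 h1.symm with h | h
          · exact h
          · exact absurd h hiu
        rw [this]; exact hlam0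
    · -- blockEig p lam
      refine ⟨vp, hvpne, hvp0, hvpsupp, fun i hi => ?_⟩
      have := congrFun hvpeig i
      rw [mask_mulVec_eq hi] at this
      rw [this, Pi.smul_apply, smul_eq_mul]
    · exact fun i => mul_nonneg (inv_nonneg.2 (le_of_lt hcpos)) (hw'0 i)
    · intro i hi
      have : w' i = v i := hw'p i hi
      have h2 : 0 < w' i := this ▸ hvpos i hi
      exact mul_pos (inv_pos.2 hcpos) h2
    · intro i hi
      apply hw'supp
      intro h
      apply hi
      rw [Pi.smul_apply, smul_eq_mul, h, mul_zero]
    · rw [show ∑ i ∈ Finset.univ.filter (fun i => b i = p), (c⁻¹ • w') i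
          = c⁻¹ * ∑ i ∈ Finset.univ.filter (fun i => b i = p), w' i from by
        rw [Finset.mul_sum]; exact Finset.sum_congr rfl fun i _ => by
          rw [Pi.smul_apply, smul_eq_mul]]
      have : ∑ i ∈ Finset.univ.filter (fun i => b i = p), w' i = c := by
        rw [hcdef]
        exact Finset.sum_congr rfl fun i hi => hw'p i (Finset.mem_filter.1 hi).2
      rw [this, inv_mul_cancel₀ hcne]
    · rw [mulVec_smul, hw'eig, smul_comm]
  · -- nonnegativity of the remainder
    intro i
    have : c * (c⁻¹ • w') i = w' i := by
      rw [Pi.smul_apply, smul_eq_mul, ← mul_assoc, mul_inv_cancel₀ hcne, one_mul]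
    rw [this]
    linarith [hw'le i]
  · -- remainder is an eigenvector
    have hfun : (fun i => v i - c * (c⁻¹ • w') i) = v - w' := by
      funext i
      rw [Pi.sub_apply, Pi.smul_apply, smul_eq_mul, ← mul_assoc,
        mul_inv_cancel₀ hcne, one_mul]
    rw [hfun]
    funext i
    rw [Matrix.mulVec_sub, Pi.sub_apply, heig, hw'eig]
    simp [mul_sub]
  · intro i hi
    intro hvi
    apply hi
    have hw'z : w' i = 0 := le_antisymm (hvi ▸ hw'le i) (hw'0 i)
    rw [hvi, Pi.smul_apply, smul_eq_mul, hw'z, mul_zero, mul_zero, sub_zero]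
  · intro i hi
    rw [Pi.smul_apply, smul_eq_mul, ← mul_assoc, mul_inv_cancel₀ hcne, one_mul,
      hw'p i hi, sub_self]

end Main

section Final
variable {n m : ℕ} {M : Matrix (Fin n) (Fin n) ℝ} {b : Fin n → Fin m}

lemma decompose (hM : ∀ i j, 0 ≤ M i j)
    (hlow : ∀ i j, b i < b j → M i j = 0)
    (hdiag : ∀ p : Fin m, _root_.IsPrimitive (diagBlock M b p) ∨
      (∀ i j, b i = p → b j = p → i = j ∧ M i j = 0))
    {lam : ℝ} (hlam : 1 ≤ lam) :
    ∀ (N : ℕ) (v : Fin n → ℝ), (∀ i, 0 ≤ v i) → M.mulVec v = lam • v →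
      ((Finset.univ.filter (fun i => v i ≠ 0)).image b).card ≤ N →
      ∃ (k : ℕ) (w : Fin k → (Fin n → ℝ)) (c : Fin k → ℝ),
        (∀ s, IsPrincipalEV M b lam (w s)) ∧ (∀ s, 0 ≤ c s) ∧ v = ∑ s, c s • w s := by
  intro N
  induction N with
  | zero =>
    intro v hv heig hcard
    have hv0 : v = 0 := by
      by_contra h
      obtain ⟨i, hi⟩ : ∃ i, v i ≠ 0 := by
        by_contra h'; push_neg at h'; exact h (funext fun i => h' i)
      have : b i ∈ (Finset.univ.filter (fun i => v i ≠ 0)).image b :=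
        Finset.mem_image.2 ⟨i, Finset.mem_filter.2 ⟨Finset.mem_univ _, hi⟩, rfl⟩
      have := Finset.card_pos.2 ⟨b i, this⟩
      omega
    exact ⟨0, Fin.elim0, Fin.elim0, fun s => s.elim0, fun s => s.elim0,
      by rw [hv0]; simp⟩
  | succ N ih =>
    intro v hv heig hcard
    by_cases hv0 : v = 0
    · exact ⟨0, Fin.elim0, Fin.elim0, fun s => s.elim0, fun s => s.elim0,
        by rw [hv0]; simp⟩
    · obtain ⟨w, c, p, hPEV, hcpos, hrem0, hremeig, hremsupp, ⟨ipp, hippb, hippv⟩, hremp⟩ :=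
        extract hM hlow hdiag hlam hv hv0 heig
      set v' : Fin n → ℝ := fun i => v i - c * w i with hv'def
      have hv'supp : (Finset.univ.filter (fun i => v' i ≠ 0)).image b
          ⊆ ((Finset.univ.filter (fun i => v i ≠ 0)).image b).erase p := by
        intro q hq
        obtain ⟨i, hi, rfl⟩ := Finset.mem_image.1 hq
        have hiv' : v' i ≠ 0 := (Finset.mem_filter.1 hi).2
        refine Finset.mem_erase.2 ⟨?_, Finset.mem_image.2
          ⟨i, Finset.mem_filter.2 ⟨Finset.mem_univ _, hremsupp i hiv'⟩, rfl⟩⟩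
        intro h
        exact hiv' (hremp i h)
      have hpmem : p ∈ (Finset.univ.filter (fun i => v i ≠ 0)).image b :=
        Finset.mem_image.2 ⟨ipp, Finset.mem_filter.2 ⟨Finset.mem_univ _, hippv⟩, hippb⟩
      have hcard' : ((Finset.univ.filter (fun i => v' i ≠ 0)).image b).card ≤ N := by
        have h1 := Finset.card_le_card hv'supp
        rw [Finset.card_erase_of_mem hpmem] at h1
        omega
      obtain ⟨k, ws, cs, hws, hcs, hsum⟩ := ih v' (fun i => hrem0 i) hremeig hcard'
      refine ⟨k + 1, Fin.cons w ws, Fin.cons c cs, ?_, ?_, ?_⟩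
      · intro s
        refine Fin.cases ?_ ?_ s
        · exact hPEV
        · exact hws
      · intro s
        refine Fin.cases ?_ ?_ s
        · exact le_of_lt hcpos
        · exact hcs
      · funext i
        rw [Finset.sum_apply]
        rw [Fin.sum_univ_succ]
        simp only [Fin.cons_zero, Fin.cons_succ, Pi.smul_apply, smul_eq_mul]
        have h1 := congrFun hsum i
        rw [hv'def] at h1
        simp only [Finset.sum_apply, Pi.smul_apply, smul_eq_mul] at h1
        linarith

end Final
/-- A non-negative vector `v ≠ 0` is an eigenvector of `M` with eigenvalue `lam ≥ 1`
iff it lies in the non-negative cone spanned by the principal eigenvectors of `M`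
with eigenvalue `lam`. -/
theorem statement11 {n m : ℕ} (M : Matrix (Fin n) (Fin n) ℝ)
    (hZ : ∀ i j, ∃ z : ℕ, M i j = (z : ℝ))
    (b : Fin n → Fin m)
    (hlow : ∀ i j, b i < b j → M i j = 0)
    (hdiag : ∀ p : Fin m, _root_.IsPrimitive (diagBlock M b p) ∨
      (∀ i j, b i = p → b j = p → i = j ∧ M i j = 0))
    (hcol : ∀ j, ∃ i, 0 < M i j)
    (lam : ℝ) (hlam : 1 ≤ lam)
    (v : Fin n → ℝ) (hv : ∀ i, 0 ≤ v i) (hvne : v ≠ 0) :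
    M.mulVec v = lam • v ↔
      ∃ (k : ℕ) (w : Fin k → (Fin n → ℝ)) (c : Fin k → ℝ),
        (∀ s, IsPrincipalEV M b lam (w s)) ∧ (∀ s, 0 ≤ c s) ∧ v = ∑ s, c s • w s := by
  have hM : ∀ i j, 0 ≤ M i j := fun i j => by
    obtain ⟨z, hz⟩ := hZ i j
    rw [hz]
    exact Nat.cast_nonneg z
  constructor
  · intro heig
    exact decompose hM hlow hdiag hlam _ v hv heig le_rfl
  · rintro ⟨k, w, c, hPEV, hc, rfl⟩
    have hws : ∀ s : Fin k, M.mulVec (w s) = lam • (w s) := by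
      intro s
      obtain ⟨p, _, _, _, _, _, _, he⟩ := hPEV s
      exact he
    funext i
    rw [mulVec_apply']
    simp only [Finset.sum_apply, Pi.smul_apply, smul_eq_mul]
    calc ∑ j, M i j * ∑ s, c s * w s j
        = ∑ j, ∑ s, M i j * (c s * w s j) := by
          refine Finset.sum_congr rfl fun j _ => ?_
          rw [Finset.mul_sum]
      _ = ∑ s, ∑ j, M i j * (c s * w s j) := Finset.sum_comm
      _ = ∑ s, c s * (M.mulVec (w s) i) := by
          refine Finset.sum_congr rfl fun s _ => ?_
          rw [mulVec_apply', Finset.mul_sum]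
          exact Finset.sum_congr rfl fun j _ => by ring
      _ = ∑ s, c s * (lam * w s i) := by
          refine Finset.sum_congr rfl fun s _ => ?_
          rw [hws s, Pi.smul_apply, smul_eq_mul]
      _ = lam * ∑ s, c s * w s i := by
          rw [Finset.mul_sum]
          exact Finset.sum_congr rfl fun s _ => by ring
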